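/- Let λ_u > 0, λ_e > 0, H > 0, D ≥ 0 and ε ∈ (0, 1). Suppose w > 0 satisfies w·e^w = π·λ_e·(H² + D²)·exp(π·λ_u·H²)/ln(1/(1 − ε)). Set β_e = 4·w²/(π⁴·λ_u²·(H² + D²)²) and Q₁ = (π²·λ_u·β_e^{1/2})/2. Then 1 − exp(−(π·λ_e/Q₁)·exp(−Q₁·(H² + D²) + π·λ_u·H²)) = ε. -/

import Mathlib

open Real

/-- Verification of the closed-form solution `R_e*` (equation (26)) of the guard-zone secrecy
outage equation `P̃_so^zone = ε` in the case `D ≥ K` (first branch of equation (25)). -/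
theorem guard_zone_outage_closed_form_solution
    (lu le H D ε w βe Q1 : ℝ)
    (hlu : 0 < lu) (hle : 0 < le) (hH : 0 < H) (hD : 0 ≤ D)
    (hε : ε ∈ Set.Ioo (0 : ℝ) 1) (hw : 0 < w)
    (hweq : w * Real.exp w
      = π * le * (H ^ 2 + D ^ 2) * Real.exp (π * lu * H ^ 2) / Real.log (1 / (1 - ε)))
    (hβe : βe = 4 * w ^ 2 / (π ^ 4 * lu ^ 2 * (H ^ 2 + D ^ 2) ^ 2))
    (hQ1 : Q1 = π ^ 2 * lu * Real.sqrt βe / 2) :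
    1 - Real.exp (-(π * le / Q1)
        * Real.exp (-(Q1 * (H ^ 2 + D ^ 2)) + π * lu * H ^ 2)) = ε := by
  obtain ⟨hε0, hε1⟩ := hε
  have hπ : 0 < π := Real.pi_pos
  have hS : 0 < H ^ 2 + D ^ 2 := by positivity
  have h1ε : 0 < 1 - ε := by linarith
  set L := Real.log (1 / (1 - ε)) with hL
  have hLpos : 0 < L := by
    apply Real.log_pos
    rw [one_div]
    exact (one_lt_inv_iff₀).2 ⟨h1ε, by linarith⟩
  -- compute sqrt βe
  have hsqrt : Real.sqrt βe = 2 * w / (π ^ 2 * lu * (H ^ 2 + D ^ 2)) := by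
    have : βe = (2 * w / (π ^ 2 * lu * (H ^ 2 + D ^ 2))) ^ 2 := by
      rw [hβe]; field_simp; ring
    rw [this, Real.sqrt_sq (by positivity)]
  have hQ : Q1 = w / (H ^ 2 + D ^ 2) := by
    rw [hQ1, hsqrt]; field_simp
  have hQpos : 0 < Q1 := by rw [hQ]; positivity
  -- the exponent equals -L
  have key : -(π * le / Q1) * Real.exp (-(Q1 * (H ^ 2 + D ^ 2)) + π * lu * H ^ 2) = -L := by
    have hQS : Q1 * (H ^ 2 + D ^ 2) = w := by
      rw [hQ]; field_simp
    rw [hQS, Real.exp_add, Real.exp_neg]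
    have hew : (0:ℝ) < Real.exp w := Real.exp_pos w
    have hweq' : w * Real.exp w * L = π * le * (H ^ 2 + D ^ 2) * Real.exp (π * lu * H ^ 2) := by
      rw [hweq]; field_simp
    rw [hQ]
    field_simp
    rw [show π * H ^ 2 * lu = π * lu * H ^ 2 by ring]
    nlinarith [hweq']
  rw [key]
  have : Real.exp (-L) = 1 - ε := by
    rw [hL, one_div, Real.log_inv, neg_neg, Real.exp_log h1ε]
  rw [this]; ring
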